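/- In dimension one, for α ≥ -1/2 and 1 < p < ∞, the power weight W_r(x) = |x|^r belongs to the Muckenhoupt class A_p associated with the measure dw_α(x) = |x|^{2α+1} dx on ℝ if and only if -(2α+2) < r < (2α+2)(p-1). -/

import Mathlib

open MeasureTheory Set Real intervalIntegral

section Helpers

lemma intervalIntegrable_abs_rpow {s : ℝ} (hs : -1 < s) (a b : ℝ) :
    IntervalIntegrable (fun x : ℝ => |x| ^ s) volume a b := by
  suffices h : ∀ c : ℝ, IntervalIntegrable (fun x : ℝ => |x| ^ s) volume 0 c from
    (h a).symm.trans (h b)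
  have key : ∀ c : ℝ, 0 ≤ c → IntervalIntegrable (fun x : ℝ => |x| ^ s) volume 0 c := by
    intro c hc
    rw [intervalIntegrable_iff]
    have h1 := intervalIntegrable_rpow' hs (a := 0) (b := c)
    rw [intervalIntegrable_iff] at h1
    refine h1.congr_fun ?_ measurableSet_uIoc
    intro x hx
    rw [uIoc_of_le hc] at hx
    simp only [abs_of_pos hx.1]
  intro c
  rcases le_total 0 c with hc | hc
  · exact key c hc
  · rw [IntervalIntegrable.iff_comp_neg]
    simp only [abs_neg, neg_zero]
    exact key (-c) (by linarith)

lemma integral_abs_rpow_symm (s a b : ℝ) :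
    ∫ x in a..b, |x| ^ s = ∫ x in (-b)..(-a), |x| ^ s := by
  rw [← intervalIntegral.integral_comp_neg fun x => |x| ^ s]
  simp only [abs_neg]

lemma integral_abs_rpow_nonneg (s a b : ℝ) (hab : a ≤ b) :
    0 ≤ ∫ x in a..b, |x| ^ s :=
  intervalIntegral.integral_nonneg hab (fun x _ => Real.rpow_nonneg (abs_nonneg x) s)

/-- Explicit value on intervals to the right of 0. -/
lemma integral_abs_rpow_of_nonneg {s : ℝ} (hs : -1 < s) {a b : ℝ} (ha : 0 ≤ a) (hab : a ≤ b) :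
    ∫ x in a..b, |x| ^ s = (b ^ (s + 1) - a ^ (s + 1)) / (s + 1) := by
  rw [show (∫ x in a..b, |x| ^ s) = ∫ x in a..b, x ^ s from ?_, integral_rpow (Or.inl hs)]
  apply intervalIntegral.integral_congr
  intro x hx
  rw [uIcc_of_le hab] at hx
  simp only [abs_of_nonneg (ha.trans hx.1)]

lemma upper_half {s : ℝ} (hs : -1 < s) {a b : ℝ} (hab : a < b) (hm : |a| ≤ b) :
    ∫ x in a..b, |x| ^ s ≤ max 1 (2 / (s + 1)) * b ^ s * (b - a) := by
  have hσ : 0 < s + 1 := by linarith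
  have hb : 0 < b := by
    have h1 : -b ≤ a := by have := neg_abs_le a; linarith
    by_contra h
    push_neg at h
    linarith
  have hbs : 0 < b ^ s := Real.rpow_pos_of_pos hb s
  have hK1 : (1:ℝ) ≤ max 1 (2 / (s + 1)) := le_max_left _ _
  have hK2 : 2 / (s + 1) ≤ max 1 (2 / (s + 1)) := le_max_right _ _
  have hK2' : 1 / (s+1) ≤ max 1 (2 / (s + 1)) := by
    refine le_trans ?_ hK2
    gcongr
    norm_num
  have hK0 : 0 < max 1 (2 / (s + 1)) := lt_of_lt_of_le one_pos hK1
  rcases le_or_gt 0 a with ha | ha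
  · -- a ≥ 0
    rcases le_or_gt 0 s with hs0 | hs0
    · -- s ≥ 0 : pointwise bound
      calc ∫ x in a..b, |x| ^ s ≤ ∫ _x in a..b, b ^ s := by
            apply intervalIntegral.integral_mono_on hab.le
              (intervalIntegrable_abs_rpow hs a b) intervalIntegrable_const
            intro x hx
            rw [abs_of_nonneg (ha.trans hx.1)]
            exact Real.rpow_le_rpow (ha.trans hx.1) hx.2 hs0
        _ = b ^ s * (b - a) := by simp [mul_comm]
        _ ≤ max 1 (2 / (s + 1)) * b ^ s * (b - a) := by
            nlinarith [mul_le_mul_of_nonneg_right hK1 (le_of_lt (mul_pos hbs (sub_pos.mpr hab)))]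
    · -- -1 < s < 0
      rw [integral_abs_rpow_of_nonneg hs ha hab.le]
      have hab' : a * b ^ s ≤ a ^ (s + 1) := by
        rcases eq_or_lt_of_le ha with h | h
        · simp [← h, Real.zero_rpow (by linarith : s + 1 ≠ 0)]
        · rw [Real.rpow_add_one (ne_of_gt h)]
          have : b ^ s ≤ a ^ s := Real.rpow_le_rpow_of_nonpos h hab.le hs0.le
          nlinarith
      have hb' : b ^ (s + 1) = b ^ s * b := Real.rpow_add_one (ne_of_gt hb) s
      have h2 : b ^ (s+1) - a ^ (s+1) ≤ b ^ s * (b - a) := by nlinarith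
      calc (b ^ (s + 1) - a ^ (s + 1)) / (s + 1) ≤ (b ^ s * (b-a)) / (s+1) := by gcongr
        _ = 1/(s+1) * (b ^ s * (b - a)) := by ring
        _ ≤ max 1 (2 / (s + 1)) * (b ^ s * (b - a)) := by
            apply mul_le_mul_of_nonneg_right hK2'
            nlinarith [mul_pos hbs (sub_pos.mpr hab)]
        _ = max 1 (2 / (s + 1)) * b ^ s * (b - a) := by ring
  · -- a < 0 : split at 0
    have hsplit := intervalIntegral.integral_add_adjacent_intervals
      (intervalIntegrable_abs_rpow hs a 0) (intervalIntegrable_abs_rpow hs 0 b)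
    rw [← hsplit]
    have e1 : (∫ x in a..(0:ℝ), |x| ^ s) = (-a) ^ (s+1) / (s+1) := by
      rw [integral_abs_rpow_symm, neg_zero, integral_abs_rpow_of_nonneg hs le_rfl (by linarith),
        Real.zero_rpow (by linarith : s + 1 ≠ 0)]
      ring
    have e2 : (∫ x in (0:ℝ)..b, |x| ^ s) = b ^ (s+1) / (s+1) := by
      rw [integral_abs_rpow_of_nonneg hs le_rfl hb.le,
        Real.zero_rpow (by linarith : s + 1 ≠ 0)]
      ring
    rw [e1, e2]
    have hna : -a ≤ b := by have := neg_abs_le a; linarith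
    have h3 : (-a) ^ (s+1) ≤ b ^ (s+1) := Real.rpow_le_rpow (by linarith) hna (by linarith)
    have hb' : b ^ (s + 1) = b ^ s * b := Real.rpow_add_one (ne_of_gt hb) s
    calc (-a) ^ (s+1) / (s+1) + b ^ (s+1) / (s+1) ≤ 2 * (b ^ (s+1) / (s+1)) := by
          rw [two_mul]
          gcongr
      _ = 2/(s+1) * (b ^ s * b) := by rw [hb']; ring
      _ ≤ max 1 (2 / (s + 1)) * (b ^ s * (b - a)) := by
          apply mul_le_mul hK2
          · gcongr
            linarith
          · positivity
          · exact hK0.le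
      _ = max 1 (2 / (s + 1)) * b ^ s * (b - a) := by ring


lemma lower_half {s : ℝ} (hs : -1 < s) {a b : ℝ} (hab : a < b) (hm : |a| ≤ b) :
    min 1 ((1/2 : ℝ) ^ s) / 4 * b ^ s * (b - a) ≤ ∫ x in a..b, |x| ^ s := by
  have hb : 0 < b := by
    have h1 : -b ≤ a := by have := neg_abs_le a; linarith
    by_contra h
    push_neg at h
    linarith
  have hbs : 0 < b ^ s := Real.rpow_pos_of_pos hb s
  set κ := min 1 ((1/2 : ℝ) ^ s) with hκdef
  have hκ0 : 0 < κ := lt_min one_pos (Real.rpow_pos_of_pos one_half_pos s)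
  set c := max a (b/2) with hcdef
  have hac : a ≤ c := le_max_left _ _
  have hcb : c < b := max_lt hab (by linarith)
  have hc2 : b/2 ≤ c := le_max_right _ _
  have hsplit := intervalIntegral.integral_add_adjacent_intervals
    (intervalIntegrable_abs_rpow hs a c) (intervalIntegrable_abs_rpow hs c b)
  have key : κ * b ^ s * (b - c) ≤ ∫ x in c..b, |x| ^ s := by
    calc κ * b ^ s * (b - c) = ∫ _x in c..b, κ * b ^ s := by simp; ring
      _ ≤ ∫ x in c..b, |x| ^ s := by
          apply intervalIntegral.integral_mono_on hcb.le intervalIntegrable_const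
            (intervalIntegrable_abs_rpow hs c b)
          intro x hx
          have hx0 : 0 < x := lt_of_lt_of_le (by linarith) hx.1
          rw [abs_of_pos hx0]
          rcases le_or_gt 0 s with hs0 | hs0
          · have h1 : κ * b ^ s ≤ (1/2 : ℝ) ^ s * b ^ s :=
              mul_le_mul_of_nonneg_right (min_le_right _ _) hbs.le
            have h2 : (1/2 : ℝ) ^ s * b ^ s = (b/2) ^ s := by
              rw [← Real.mul_rpow (by norm_num) hb.le, one_div, inv_mul_eq_div]
            have h3 : (b/2 : ℝ) ^ s ≤ x ^ s :=
              Real.rpow_le_rpow (by linarith) (by linarith [hx.1, hc2]) hs0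
            linarith
          · have h1 : κ * b ^ s ≤ 1 * b ^ s :=
              mul_le_mul_of_nonneg_right (min_le_left _ _) hbs.le
            have h3 : b ^ s ≤ x ^ s := Real.rpow_le_rpow_of_nonpos hx0 hx.2 hs0.le

            linarith
  have hquarter : (b - a) / 4 ≤ b - c := by
    have h1 : -b ≤ a := by have := neg_abs_le a; linarith
    rcases max_cases a (b/2) with ⟨h, _⟩ | ⟨h, _⟩ <;> rw [hcdef, h] <;> linarith
  have hnn : 0 ≤ ∫ x in a..c, |x| ^ s := integral_abs_rpow_nonneg s a c hac
  have : κ * b ^ s * ((b-a)/4) ≤ κ * b ^ s * (b - c) := by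
    apply mul_le_mul_of_nonneg_left hquarter (by positivity)
  calc κ / 4 * b ^ s * (b - a) = κ * b ^ s * ((b-a)/4) := by ring
    _ ≤ ∫ x in c..b, |x| ^ s := le_trans this key
    _ ≤ ∫ x in a..b, |x| ^ s := by rw [← hsplit]; linarith

lemma max_abs_pos {a b : ℝ} (hab : a < b) : 0 < max |a| |b| := by
  rcases le_or_gt b 0 with h | h
  · have : 0 < |a| := abs_pos.mpr (by linarith)
    exact lt_of_lt_of_le this (le_max_left _ _)
  · exact lt_of_lt_of_le (abs_pos.mpr (ne_of_gt h)) (le_max_right _ _)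

lemma integral_abs_rpow_le {s : ℝ} (hs : -1 < s) {a b : ℝ} (hab : a < b) :
    ∫ x in a..b, |x| ^ s ≤ max 1 (2 / (s + 1)) * (max |a| |b|) ^ s * (b - a) := by
  rcases le_total |a| |b| with h | h
  · have hb : 0 < b := by
      by_contra hb
      push_neg at hb
      rw [abs_of_nonpos (by linarith), abs_of_nonpos hb] at h
      linarith
    have h' := h
    rw [abs_of_pos hb] at h'
    rw [max_eq_right h, abs_of_pos hb]
    exact upper_half hs hab h'
  · have ha : a < 0 := by
      by_contra ha
      push_neg at ha
      rw [abs_of_nonneg ha, abs_of_nonneg (by linarith)] at h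
      linarith
    rw [max_eq_left h, abs_of_neg ha, integral_abs_rpow_symm]
    have h2 : |(-b)| ≤ -a := by rw [abs_neg, ← abs_of_neg ha]; exact h
    have := upper_half hs (by linarith : -b < -a) h2
    calc ∫ x in (-b)..(-a), |x| ^ s ≤ max 1 (2/(s+1)) * (-a) ^ s * (-a - -b) := this
      _ = max 1 (2/(s+1)) * (-a) ^ s * (b - a) := by ring_nf
  -- done
lemma le_integral_abs_rpow {s : ℝ} (hs : -1 < s) {a b : ℝ} (hab : a < b) :
    min 1 ((1/2 : ℝ) ^ s) / 4 * (max |a| |b|) ^ s * (b - a) ≤ ∫ x in a..b, |x| ^ s := by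
  rcases le_total |a| |b| with h | h
  · have hb : 0 < b := by
      by_contra hb
      push_neg at hb
      rw [abs_of_nonpos (by linarith), abs_of_nonpos hb] at h
      linarith
    have h' := h
    rw [abs_of_pos hb] at h'
    rw [max_eq_right h, abs_of_pos hb]
    exact lower_half hs hab h'
  · have ha : a < 0 := by
      by_contra ha
      push_neg at ha
      rw [abs_of_nonneg ha, abs_of_nonneg (by linarith)] at h
      linarith
    rw [max_eq_left h, abs_of_neg ha, integral_abs_rpow_symm]
    have h2 : |(-b)| ≤ -a := by rw [abs_neg, ← abs_of_neg ha]; exact h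
    have := lower_half hs (by linarith : -b < -a) h2
    calc min 1 ((1/2 : ℝ) ^ s) / 4 * (-a) ^ s * (b - a)
        = min 1 ((1/2 : ℝ) ^ s) / 4 * (-a) ^ s * (-a - -b) := by ring_nf
      _ ≤ ∫ x in (-b)..(-a), |x| ^ s := this

lemma integral_abs_rpow_mul (u v a b : ℝ) :
    (∫ x in a..b, |x| ^ u * |x| ^ v) = ∫ x in a..b, |x| ^ (u + v) := by
  apply intervalIntegral.integral_congr_ae
  have h0 : ∀ᵐ x : ℝ, x ≠ (0:ℝ) := by
    rw [ae_iff]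
    simp only [not_not, setOf_eq_eq_singleton]
    exact measure_singleton 0
  filter_upwards [h0] with x hx _
  exact (Real.rpow_add (abs_pos.mpr hx) u v).symm

lemma abs_rpow_rpow (x u v : ℝ) : (|x| ^ u) ^ v = |x| ^ (u * v) :=
  (Real.rpow_mul (abs_nonneg x) u v).symm

lemma key_prod {p s₁ s₂ s₀ K₁ K₂ c₀ m L : ℝ} (hm : 0 < m) (hL : 0 < L) (hp : 1 < p)
    (hs : s₁ + s₂ * (p-1) = s₀ * p) (hK₁ : 0 < K₁) (hK₂ : 0 < K₂) (hc₀ : 0 < c₀) :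
    (K₁ * m ^ s₁ * L) * (K₂ * m ^ s₂ * L) ^ (p-1)
      = (K₁ * K₂ ^ (p-1) / c₀ ^ p) * (c₀ * m ^ s₀ * L) ^ p := by
  have e1 : (K₂ * m ^ s₂ * L) ^ (p-1) = K₂^(p-1) * m ^ (s₂*(p-1)) * L^(p-1) := by
    rw [Real.mul_rpow (by positivity) hL.le, Real.mul_rpow hK₂.le (by positivity),
        ← Real.rpow_mul hm.le]
  have e2 : (c₀ * m ^ s₀ * L) ^ p = c₀^p * m ^ (s₀*p) * L^p := by
    rw [Real.mul_rpow (by positivity) hL.le, Real.mul_rpow hc₀.le (by positivity),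
        ← Real.rpow_mul hm.le]
  have e3 : m ^ s₁ * m ^ (s₂*(p-1)) = m ^ (s₀*p) := by
    rw [← Real.rpow_add hm, hs]
  have e4 : L ^ (1 + (p-1)) = L ^ (1:ℝ) * L ^ (p-1) := Real.rpow_add hL 1 (p-1)
  rw [show (1:ℝ)+(p-1)=p by ring, Real.rpow_one] at e4
  have hc : c₀ ^ p ≠ 0 := (Real.rpow_pos_of_pos hc₀ p).ne'
  calc (K₁ * m ^ s₁ * L) * (K₂ * m ^ s₂ * L) ^ (p-1)
      = K₁ * K₂^(p-1) * (m ^ s₁ * m ^ (s₂*(p-1))) * (L * L^(p-1)) := by rw [e1]; ring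
    _ = K₁ * K₂^(p-1) * m ^ (s₀*p) * L ^ p := by rw [e3, ← e4]
    _ = (K₁ * K₂ ^ (p-1) / c₀ ^ p) * (c₀ * m ^ s₀ * L) ^ p := by
        rw [e2]; field_simp


lemma cont_int (s : ℝ) {u v : ℝ} (hu : 0 < u) (huv : u ≤ v) :
    IntervalIntegrable (fun x : ℝ => |x| ^ s) volume u v := by
  apply ContinuousOn.intervalIntegrable
  apply ContinuousOn.rpow_const continuous_abs.continuousOn
  intro x hx
  left
  rw [uIcc_of_le huv] at hx
  exact abs_ne_zero.mpr (ne_of_gt (lt_of_lt_of_le hu hx.1))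

/-- Lower bound by `-log ε` when the exponent is `≤ -1`. -/
lemma log_le_integral {s : ℝ} (hs : s ≤ -1) {ε : ℝ} (hε : 0 < ε) (hε1 : ε < 1) :
    -Real.log ε ≤ ∫ x in ε..1, |x| ^ s := by
  have hinv : IntervalIntegrable (fun x : ℝ => x⁻¹) volume ε 1 := by
    apply intervalIntegrable_inv _ continuousOn_id
    intro x hx
    rw [uIcc_of_le hε1.le] at hx
    exact ne_of_gt (lt_of_lt_of_le hε hx.1)
  have key : (∫ x in ε..1, x⁻¹) ≤ ∫ x in ε..1, |x| ^ s := by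
    apply intervalIntegral.integral_mono_on hε1.le hinv (cont_int s hε hε1.le)
    intro x hx
    have hx0 : 0 < x := lt_of_lt_of_le hε hx.1
    rw [abs_of_pos hx0, ← Real.rpow_neg_one x]
    exact Real.rpow_le_rpow_of_exponent_ge hx0 hx.2 hs
  have : (∫ x in ε..1, x⁻¹) = -Real.log ε := by
    rw [integral_inv]
    · rw [one_div, Real.log_inv]
    · rw [uIcc_of_le hε1.le]
      intro h
      exact absurd h.1 (not_le.mpr hε)
  linarith [key, this.ge]

/-- Monotonicity: the integral from ε is at least the integral from 1/2. -/
lemma half_le_integral (s : ℝ) {ε : ℝ} (hε : 0 < ε) (hεh : ε ≤ 1/2) :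
    (∫ x in (1/2:ℝ)..1, |x| ^ s) ≤ ∫ x in ε..1, |x| ^ s := by
  have h1 := cont_int s hε hεh
  have h2 := cont_int s (by norm_num : (0:ℝ) < 1/2) (by norm_num : (1/2:ℝ) ≤ 1)
  rw [← intervalIntegral.integral_add_adjacent_intervals h1 h2]
  have : 0 ≤ ∫ x in ε..(1/2:ℝ), |x| ^ s := integral_abs_rpow_nonneg s _ _ hεh
  linarith

lemma half_integral_pos (s : ℝ) : 0 < ∫ x in (1/2:ℝ)..1, |x| ^ s := by
  apply intervalIntegral_pos_of_pos_on
    (cont_int s (by norm_num) (by norm_num))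
  · intro x hx
    exact Real.rpow_pos_of_pos (abs_pos.mpr (ne_of_gt (lt_trans (by norm_num) hx.1))) s
  · norm_num


end Helpers

/-- The Muckenhoupt $A_p$ condition for the space $(ℝ, |x|^{2α+1}dx)$, $1<p<∞$,
written in the equivalent form avoiding divisions. -/
def IsApAlpha (α p : ℝ) (W : ℝ → ℝ) : Prop :=
  ∃ C : ℝ, ∀ a b : ℝ, a < b →
    (∫ x in a..b, W x * |x| ^ (2 * α + 1)) *
      (∫ x in a..b, (W x) ^ (-1 / (p - 1)) * |x| ^ (2 * α + 1)) ^ (p - 1)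
    ≤ C * (∫ x in a..b, |x| ^ (2 * α + 1)) ^ p

theorem power_weight_Ap (α p r : ℝ) (hα : -1/2 ≤ α) (hp : 1 < p) :
    IsApAlpha α p (fun x => |x| ^ r) ↔ -(2 * α + 2) < r ∧ r < (2 * α + 2) * (p - 1) := by
  constructor
  · intro h
    obtain ⟨C, hC⟩ := h
    have hp1 : 0 < p - 1 := by linarith
    have hC' : ∀ ε : ℝ, 0 < ε → ε < 1 →
        (∫ x in ε..1, |x| ^ (r + (2*α+1))) *
          (∫ x in ε..1, |x| ^ (r * (-1/(p-1)) + (2*α+1))) ^ (p-1)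
        ≤ C * (∫ x in ε..1, |x| ^ (2*α+1)) ^ p := by
      intro ε hε hε1
      have h0 := hC ε 1 hε1
      simp only [abs_rpow_rpow] at h0
      rw [integral_abs_rpow_mul, integral_abs_rpow_mul] at h0
      exact h0
    -- bound on the right-hand side
    have hDbd : ∀ ε : ℝ, 0 < ε → ε < 1 →
        C * (∫ x in ε..1, |x| ^ (2*α+1)) ^ p ≤ max C 0 := by
      intro ε hε hε1
      have hDnn := integral_abs_rpow_nonneg (2*α+1) ε 1 hε1.le
      have hD1 : (∫ x in ε..1, |x| ^ (2*α+1)) ≤ 1 := by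
        calc (∫ x in ε..1, |x| ^ (2*α+1)) ≤ ∫ _x in ε..1, (1:ℝ) := by
              apply intervalIntegral.integral_mono_on hε1.le (cont_int _ hε hε1.le)
                intervalIntegrable_const
              intro x hx
              rw [abs_of_pos (lt_of_lt_of_le hε hx.1)]
              exact Real.rpow_le_one (by linarith [hx.1]) hx.2 (by linarith)
          _ = 1 - ε := by simp
          _ ≤ 1 := by linarith
      have hDp1 : (∫ x in ε..1, |x| ^ (2*α+1)) ^ p ≤ 1 :=
        Real.rpow_le_one hDnn hD1 (by linarith)
      have hDp0 : 0 ≤ (∫ x in ε..1, |x| ^ (2*α+1)) ^ p := Real.rpow_nonneg hDnn p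
      calc C * (∫ x in ε..1, |x| ^ (2*α+1)) ^ p
          ≤ max C 0 * (∫ x in ε..1, |x| ^ (2*α+1)) ^ p :=
            mul_le_mul_of_nonneg_right (le_max_left C 0) hDp0
        _ ≤ max C 0 * 1 := mul_le_mul_of_nonneg_left hDp1 (le_max_right C 0)
        _ = max C 0 := mul_one _
    constructor
    · -- r > -(2α+2)
      by_contra hcon
      push_neg at hcon
      have hs₁ : r + (2*α+1) ≤ -1 := by linarith
      set β := ∫ x in (1/2:ℝ)..1, |x| ^ (r * (-1/(p-1)) + (2*α+1)) with hβdef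
      have hβ : 0 < β := half_integral_pos _
      have hβp : 0 < β ^ (p-1) := Real.rpow_pos_of_pos hβ _
      set M := (max C 0 + 1) / β ^ (p-1) with hMdef
      have hM : 0 < M := by
        apply div_pos _ hβp
        have := le_max_right C 0
        linarith
      set ε := min (Real.exp (-M)) (1/2 : ℝ) with hεdef
      have hε : 0 < ε := lt_min (Real.exp_pos _) (by norm_num)
      have hεh : ε ≤ 1/2 := min_le_right _ _
      have hε1 : ε < 1 := lt_of_le_of_lt hεh (by norm_num)
      have hlog : M ≤ -Real.log ε := by
        have h1 : Real.log ε ≤ Real.log (Real.exp (-M)) :=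
          Real.log_le_log hε (min_le_left _ _)
        rw [Real.log_exp] at h1
        linarith
      have hA : M ≤ ∫ x in ε..1, |x| ^ (r + (2*α+1)) :=
        le_trans hlog (log_le_integral hs₁ hε hε1)
      have hB : β ≤ ∫ x in ε..1, |x| ^ (r * (-1/(p-1)) + (2*α+1)) :=
        half_le_integral _ hε hεh
      have hBp : β ^ (p-1) ≤ (∫ x in ε..1, |x| ^ (r * (-1/(p-1)) + (2*α+1))) ^ (p-1) :=
        Real.rpow_le_rpow hβ.le hB (by linarith)
      have hmain := hC' ε hε hε1
      have hlower : M * β ^ (p-1) ≤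
          (∫ x in ε..1, |x| ^ (r + (2*α+1))) *
            (∫ x in ε..1, |x| ^ (r * (-1/(p-1)) + (2*α+1))) ^ (p-1) :=
        mul_le_mul hA hBp hβp.le (le_trans hM.le hA)
      have heq : M * β ^ (p-1) = max C 0 + 1 := div_mul_cancel₀ _ hβp.ne'
      have := hDbd ε hε hε1
      linarith
    · -- r < (2α+2)(p-1)
      by_contra hcon
      push_neg at hcon
      have hs₂ : r * (-1/(p-1)) + (2*α+1) ≤ -1 := by
        have h1 : 2*α+2 ≤ r / (p-1) := (le_div_iff₀ hp1).mpr (by linarith)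
        have h2 : r * (-1/(p-1)) = -(r/(p-1)) := by ring
        linarith [h2.le, h2.ge]
      set A0 := ∫ x in (1/2:ℝ)..1, |x| ^ (r + (2*α+1)) with hA0def
      have hA0 : 0 < A0 := half_integral_pos _
      set N := (max C 0 + 1) / A0 with hNdef
      have hN : 0 < N := by
        apply div_pos _ hA0
        have := le_max_right C 0
        linarith
      set M := max (N ^ (p-1)⁻¹) 1 with hMdef
      have hM1 : (1:ℝ) ≤ M := le_max_right _ _
      have hM : 0 < M := lt_of_lt_of_le one_pos hM1
      set ε := min (Real.exp (-M)) (1/2 : ℝ) with hεdef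
      have hε : 0 < ε := lt_min (Real.exp_pos _) (by norm_num)
      have hεh : ε ≤ 1/2 := min_le_right _ _
      have hε1 : ε < 1 := lt_of_le_of_lt hεh (by norm_num)
      have hlog : M ≤ -Real.log ε := by
        have h1 : Real.log ε ≤ Real.log (Real.exp (-M)) :=
          Real.log_le_log hε (min_le_left _ _)
        rw [Real.log_exp] at h1
        linarith
      have hB : M ≤ ∫ x in ε..1, |x| ^ (r * (-1/(p-1)) + (2*α+1)) :=
        le_trans hlog (log_le_integral hs₂ hε hε1)
      have hMN : N ≤ M ^ (p-1) := by
        have h1 : (N ^ (p-1)⁻¹) ^ (p-1) ≤ M ^ (p-1) :=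
          Real.rpow_le_rpow (Real.rpow_nonneg hN.le _) (le_max_left _ _) (by linarith)
        rwa [← Real.rpow_mul hN.le, inv_mul_cancel₀ (ne_of_gt hp1), Real.rpow_one] at h1
      have hBp : N ≤ (∫ x in ε..1, |x| ^ (r * (-1/(p-1)) + (2*α+1))) ^ (p-1) :=
        le_trans hMN (Real.rpow_le_rpow hM.le hB (by linarith))
      have hA : A0 ≤ ∫ x in ε..1, |x| ^ (r + (2*α+1)) := half_le_integral _ hε hεh
      have hmain := hC' ε hε hε1
      have hlower : A0 * N ≤
          (∫ x in ε..1, |x| ^ (r + (2*α+1))) *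
            (∫ x in ε..1, |x| ^ (r * (-1/(p-1)) + (2*α+1))) ^ (p-1) :=
        mul_le_mul hA hBp hN.le (le_trans hA0.le hA)
      have heq : A0 * N = max C 0 + 1 := by
        rw [hNdef, mul_div_cancel₀ _ (ne_of_gt hA0)]
      have := hDbd ε hε hε1
      linarith
  · rintro ⟨h1, h2⟩
    have hp1 : 0 < p - 1 := by linarith
    set s₀ : ℝ := 2 * α + 1 with hs₀def
    have hs₀nn : 0 ≤ s₀ := by rw [hs₀def]; linarith
    set s₁ : ℝ := r + s₀ with hs₁def
    set s₂ : ℝ := r * (-1 / (p-1)) + s₀ with hs₂def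
    have hs₀ : -1 < s₀ := by linarith
    have hs₁ : -1 < s₁ := by rw [hs₁def, hs₀def]; linarith
    have hs₂ : -1 < s₂ := by
      rw [hs₂def, hs₀def]
      have hr : r / (p-1) < 2*α+2 := (div_lt_iff₀ hp1).mpr (by linarith)
      have : r * (-1/(p-1)) = -(r/(p-1)) := by ring
      rw [this]
      linarith
    have hexps : s₁ + s₂ * (p-1) = s₀ * p := by
      rw [hs₁def, hs₂def]
      field_simp
      ring
    set K₁ : ℝ := max 1 (2 / (s₁ + 1)) with hK₁def
    set K₂ : ℝ := max 1 (2 / (s₂ + 1)) with hK₂def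
    set c₀ : ℝ := min 1 ((1/2 : ℝ) ^ s₀) / 4 with hc₀def
    have hK₁0 : 0 < K₁ := lt_of_lt_of_le one_pos (le_max_left _ _)
    have hK₂0 : 0 < K₂ := lt_of_lt_of_le one_pos (le_max_left _ _)
    have hc₀0 : 0 < c₀ := by
      rw [hc₀def]
      have := Real.rpow_pos_of_pos (by norm_num : (0:ℝ) < 1/2) s₀
      have : 0 < min 1 ((1/2 : ℝ) ^ s₀) := lt_min one_pos this
      positivity
    refine ⟨K₁ * K₂ ^ (p-1) / c₀ ^ p, fun a b hab => ?_⟩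
    simp only
    rw [show (2*α+1 : ℝ) = s₀ from rfl]
    simp only [abs_rpow_rpow]
    rw [integral_abs_rpow_mul r s₀ a b, integral_abs_rpow_mul (r * (-1/(p-1))) s₀ a b]
    set m : ℝ := max |a| |b| with hmdef
    have hm : 0 < m := max_abs_pos hab
    have hL : 0 < b - a := sub_pos.mpr hab
    have h₁le : (∫ x in a..b, |x| ^ (r + s₀)) ≤ K₁ * m ^ s₁ * (b - a) := integral_abs_rpow_le hs₁ hab
    have h₂le : (∫ x in a..b, |x| ^ (r * (-1/(p-1)) + s₀)) ≤ K₂ * m ^ s₂ * (b - a) :=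
      integral_abs_rpow_le hs₂ hab
    have h₀ge : c₀ * m ^ s₀ * (b - a) ≤ ∫ x in a..b, |x| ^ s₀ := by
      have := le_integral_abs_rpow hs₀ hab
      calc c₀ * m ^ s₀ * (b-a) = min 1 ((1/2 : ℝ) ^ s₀) / 4 * m ^ s₀ * (b-a) := by rw [hc₀def]
        _ ≤ _ := this
    have h₂nn : 0 ≤ ∫ x in a..b, |x| ^ (r * (-1/(p-1)) + s₀) :=
      integral_abs_rpow_nonneg _ a b hab.le
    have h₁nn : 0 ≤ ∫ x in a..b, |x| ^ (r + s₀) := integral_abs_rpow_nonneg _ a b hab.le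
    have step1 : (∫ x in a..b, |x| ^ (r + s₀)) *
        (∫ x in a..b, |x| ^ (r * (-1/(p-1)) + s₀)) ^ (p-1)
        ≤ (K₁ * m ^ s₁ * (b-a)) * (K₂ * m ^ s₂ * (b-a)) ^ (p-1) := by
      apply mul_le_mul h₁le (Real.rpow_le_rpow h₂nn h₂le (by linarith))
        (Real.rpow_nonneg h₂nn _) (by positivity)
    have step2 : (K₁ * m ^ s₁ * (b-a)) * (K₂ * m ^ s₂ * (b-a)) ^ (p-1)
        = (K₁ * K₂ ^ (p-1) / c₀ ^ p) * (c₀ * m ^ s₀ * (b-a)) ^ p :=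
      key_prod hm hL hp hexps hK₁0 hK₂0 hc₀0
    have step3 : (K₁ * K₂ ^ (p-1) / c₀ ^ p) * (c₀ * m ^ s₀ * (b-a)) ^ p
        ≤ (K₁ * K₂ ^ (p-1) / c₀ ^ p) * (∫ x in a..b, |x| ^ s₀) ^ p := by
      apply mul_le_mul_of_nonneg_left (Real.rpow_le_rpow (by positivity) h₀ge (by linarith))
      positivity
    have : r + s₀ = s₁ := rfl
    linarith [step1, step3, step2.symm.le]
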